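/- Let e, k, j, n be positive integers with n ≥ 2, j ≥ 2, j + k ≤ e - 1, satisfying (n-1)(e-2) + (n-1)j < nk ≤ (n-1)e + nj - (2n-1). Then the Frobenius number of S_k^e(j) is ne + nj + nk - 1 and its genus is n²k - n(n-1)j - (n-1)²e + (n-1)(2n-1) + e - 1. -/

import Mathlib

/-- The set of gaps of a numerical semigroup (submonoid of ℕ). -/
def gapsOf (S : AddSubmonoid ℕ) : Set ℕ := {n | n ∉ S}

/-- The Frobenius number: the largest gap. -/
noncomputable def frobeniusNumber (S : AddSubmonoid ℕ) : ℕ := sSup (gapsOf S)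

/-- The genus: the number of gaps. -/
noncomputable def genusOf (S : AddSubmonoid ℕ) : ℕ := Nat.card (gapsOf S)

/-- A numerical semigroup is symmetric iff 2g = F + 1. -/
def IsSymmetricNS (S : AddSubmonoid ℕ) : Prop :=
  2 * genusOf S = frobeniusNumber S + 1

/-- The Sally type semigroup `S_k^e(j) = ⟨e,…,e+j-1, e+j+k,…,2e-1⟩`. -/
def sally (e k j : ℕ) : AddSubmonoid ℕ :=
  AddSubmonoid.closure (Set.Ico e (e + j) ∪ Set.Ico (e + j + k) (2 * e))


lemma sg_gen1 (e k j x : ℕ) (h1 : e ≤ x) (h2 : x < e + j) : x ∈ sally e k j :=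
  AddSubmonoid.subset_closure (Or.inl ⟨h1, h2⟩)

lemma sg_gen2 (e k j x : ℕ) (h1 : e + j + k ≤ x) (h2 : x < 2 * e) : x ∈ sally e k j :=
  AddSubmonoid.subset_closure (Or.inr ⟨h1, h2⟩)

lemma sg_repr_mem (e k j : ℕ) (hj : 1 ≤ j) (hjk : j + k + 1 ≤ e) :
    ∀ s a b x, a + b = s → 1 ≤ x → a*e + b*(e+j+k) ≤ x →
      x ≤ a*(e+j-1) + b*(2*e-1) → x ∈ sally e k j := by
  intro s
  induction s with
  | zero =>
    intro a b x hab hx h1 h2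
    obtain ⟨rfl, rfl⟩ : a = 0 ∧ b = 0 := by omega
    simp at h2; omega
  | succ s ih =>
    intro a b x hab hx h1 h2
    rcases a with _ | a'
    · -- a = 0, b = s+1
      obtain rfl : b = s + 1 := by omega
      rcases Nat.eq_zero_or_pos s with rfl | hs
      · -- b = 1
        have e1 : 1*(e+j+k) = e+j+k := by ring
        have e2 : 1*(2*e-1) = 2*e-1 := by ring
        exact sg_gen2 e k j x (by omega) (by omega)
      · -- b = s+1, s ≥ 1
        have E1 : (s+1)*(e+j+k) = s*(e+j+k) + (e+j+k) := by ring
        have E2 : (s+1)*(2*e-1) = s*(2*e-1) + (2*e-1) := by ring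
        have hLU : s*(e+j+k) ≤ s*(2*e-1) := Nat.mul_le_mul_left _ (by omega)
        have hL1 : 1 ≤ s*(e+j+k) := by
          have : 1*(e+j+k) ≤ s*(e+j+k) := Nat.mul_le_mul_right _ hs
          omega
        set g := min (2*e-1) (x - s*(e+j+k)) with hg
        have hmem : x - g ∈ sally e k j := by
          apply ih 0 s (x - g) (by omega) (by omega) (by simpa using (by omega : s*(e+j+k) ≤ x - g)) (by simpa using (by omega : x - g ≤ s*(2*e-1)))
        have hgen : g ∈ sally e k j := sg_gen2 e k j g (by omega) (by omega)
        have hx' : x = g + (x - g) := by omega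
        rw [hx']; exact (sally e k j).add_mem hgen hmem
    · -- a = a'+1
      have E1 : (a'+1)*e = a'*e + e := by ring
      have E2 : (a'+1)*(e+j-1) = a'*(e+j-1) + (e+j-1) := by ring
      rcases Nat.eq_zero_or_pos s with rfl | hs
      · obtain ⟨rfl, rfl⟩ : a' = 0 ∧ b = 0 := by omega
        simp at h1 h2
        exact sg_gen1 e k j x (by omega) (by omega)
      · have hLU : a'*e + b*(e+j+k) ≤ a'*(e+j-1) + b*(2*e-1) := by
          have t1 : a'*e ≤ a'*(e+j-1) := Nat.mul_le_mul_left _ (by omega)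
          have t2 : b*(e+j+k) ≤ b*(2*e-1) := Nat.mul_le_mul_left _ (by omega)
          omega
        have hL1 : 1 ≤ a'*e + b*(e+j+k) ∨ (a' = 0 ∧ b = 0) := by
          rcases Nat.eq_zero_or_pos a' with rfl | ha
          · rcases Nat.eq_zero_or_pos b with rfl | hb
            · right; exact ⟨rfl, rfl⟩
            · left
              have : 1*(e+j+k) ≤ b*(e+j+k) := Nat.mul_le_mul_right _ hb
              omega
          · left
            have : 1*e ≤ a'*e := Nat.mul_le_mul_right _ ha
            omega
        rcases hL1 with hL1 | ⟨rfl, rfl⟩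
        · set g := min (e+j-1) (x - (a'*e + b*(e+j+k))) with hg
          have hmem : x - g ∈ sally e k j :=
            ih a' b (x - g) (by omega) (by omega) (by omega) (by omega)
          have hgen : g ∈ sally e k j := sg_gen1 e k j g (by omega) (by omega)
          have hx' : x = g + (x - g) := by omega
          rw [hx']; exact (sally e k j).add_mem hgen hmem
        · omega

lemma sg_mem_repr (e k j x : ℕ) (hx : x ∈ sally e k j) :
    ∃ a b, a*e + b*(e+j+k) ≤ x ∧ x ≤ a*(e+j-1) + b*(2*e-1) := by
  induction hx using AddSubmonoid.closure_induction with
  | mem y hy =>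
    rcases hy with ⟨h1, h2⟩ | ⟨h1, h2⟩
    · exact ⟨1, 0, by omega, by omega⟩
    · exact ⟨0, 1, by omega, by omega⟩
  | zero => exact ⟨0, 0, by omega, by omega⟩
  | add y z hy hz ihy ihz =>
    obtain ⟨a1, b1, hy1, hy2⟩ := ihy
    obtain ⟨a2, b2, hz1, hz2⟩ := ihz
    refine ⟨a1+a2, b1+b2, ?_, ?_⟩ <;>
    · have E1 : (a1+a2)*e = a1*e + a2*e := by ring
      have E2 : (b1+b2)*(e+j+k) = b1*(e+j+k) + b2*(e+j+k) := by ring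
      have E3 : (a1+a2)*(e+j-1) = a1*(e+j-1) + a2*(e+j-1) := by ring
      have E4 : (b1+b2)*(2*e-1) = b1*(2*e-1) + b2*(2*e-1) := by ring
      omega

-- avoidance: odd runs
lemma sg_avoid_odd (e k j t a b x : ℕ) (hj : 1 ≤ j) (hjk : j+k+1 ≤ e)
    (hL : a*e + b*(e+j+k) ≤ x) (hU : x ≤ a*(e+j-1) + b*(2*e-1))
    (hlo : (2*t+1)*(e+j-1) < x) (hhi : x < (t+1)*(e+j+k)) : False := by
  by_cases hb : t+1 ≤ b
  · have h1 : (t+1)*(e+j+k) ≤ b*(e+j+k) := Nat.mul_le_mul_right _ hb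
    omega
  · set u := t - b with hu
    have htu : t = b + u := by omega
    by_cases ha : 2*u+2 ≤ a
    · have h1 : (2*u+2)*e ≤ a*e := Nat.mul_le_mul_right _ ha
      have h2 : (u+1)*(e+j+k+1) ≤ (u+1)*(2*e) := Nat.mul_le_mul_left _ (by omega)
      have E1 : (u+1)*(e+j+k+1) = (u+1)*(e+j+k) + (u+1) := by ring
      have E2 : (u+1)*(2*e) = (2*u+2)*e := by ring
      have E3 : (t+1)*(e+j+k) = b*(e+j+k) + (u+1)*(e+j+k) := by rw [htu]; ring
      omega
    · set v := e + j - 1 with hv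
      have h1 : a*v ≤ (2*u+1)*v := Nat.mul_le_mul_right _ (by omega)
      have h2 : b*(2*e-1) ≤ b*(2*v) := Nat.mul_le_mul_left _ (by omega)
      have E1 : (2*u+1)*v + b*(2*v) = (2*t+1)*v := by rw [htu]; ring
      omega

-- avoidance: even runs
lemma sg_avoid_even (e k j t a b x : ℕ) (hj : 1 ≤ j) (hjk : j+k+1 ≤ e)
    (hL : a*e + b*(e+j+k) ≤ x) (hU : x ≤ a*(e+j-1) + b*(2*e-1))
    (hlo : (2*t+2)*(e+j-1) < x) (hhi : x < e + (t+1)*(e+j+k)) : False := by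
  set v := e + j - 1 with hv
  by_cases hb2 : t+2 ≤ b
  · have h1 : (t+2)*(e+j+k) ≤ b*(e+j+k) := Nat.mul_le_mul_right _ hb2
    have E1 : (t+2)*(e+j+k) = (t+1)*(e+j+k) + (e+j+k) := by ring
    omega
  · by_cases hb1 : b = t+1
    · subst hb1
      by_cases ha : 1 ≤ a
      · have h1 : 1*e ≤ a*e := Nat.mul_le_mul_right _ ha
        omega
      · obtain rfl : a = 0 := by omega
        have h1 : (t+1)*(2*e-1) ≤ (t+1)*(2*v) := Nat.mul_le_mul_left _ (by omega)
        have E1 : (t+1)*(2*v) = (2*t+2)*v := by ring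
        simp only [Nat.zero_mul] at hL hU
        omega
    · have hb : b ≤ t := by omega
      set u := t - b with hu
      have htu : t = b + u := by omega
      by_cases ha : 2*u+3 ≤ a
      · have h1 : (2*u+3)*e ≤ a*e := Nat.mul_le_mul_right _ ha
        have h2 : (u+1)*(e+j+k+1) ≤ (u+1)*(2*e) := Nat.mul_le_mul_left _ (by omega)
        have E1 : (u+1)*(e+j+k+1) = (u+1)*(e+j+k) + (u+1) := by ring
        have E2 : (2*u+3)*e = (u+1)*(2*e) + e := by ring
        have E3 : (t+1)*(e+j+k) = b*(e+j+k) + (u+1)*(e+j+k) := by rw [htu]; ring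
        omega
      · have h1 : a*v ≤ (2*u+2)*v := Nat.mul_le_mul_right _ (by omega)
        have h2 : b*(2*e-1) ≤ b*(2*v) := Nat.mul_le_mul_left _ (by omega)
        have E1 : (2*u+2)*v + b*(2*v) = (2*t+2)*v := by rw [htu]; ring
        omega

-- any nonzero element is ≥ e
lemma sg_pos (e k j a b x : ℕ)
    (hL : a*e + b*(e+j+k) ≤ x) (hU : x ≤ a*(e+j-1) + b*(2*e-1)) (hx : 1 ≤ x) :
    e ≤ x := by
  by_cases ha : 1 ≤ a
  · have h1 : 1*e ≤ a*e := Nat.mul_le_mul_right _ ha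
    omega
  · by_cases hb : 1 ≤ b
    · have h1 : 1*(e+j+k) ≤ b*(e+j+k) := Nat.mul_le_mul_right _ hb
      omega
    · obtain rfl : a = 0 := by omega
      obtain rfl : b = 0 := by omega
      simp at hU; omega

-- generic chain covering lemma
lemma sg_chain (Lf Uf : ℕ → ℕ) :
    ∀ (T : ℕ), (∀ i, i ≤ T → Lf i ≤ Uf i) → (∀ i, i < T → Lf (i+1) ≤ Uf i + 1) →
      ∀ x, Lf 0 ≤ x → x ≤ Uf T → ∃ i, i ≤ T ∧ Lf i ≤ x ∧ x ≤ Uf i := by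
  intro T
  induction T with
  | zero => intro _ _ x hx1 hx2; exact ⟨0, le_refl _, hx1, hx2⟩
  | succ T ih =>
    intro h1 h2 x hx1 hx2
    by_cases hc : x ≤ Uf T
    · obtain ⟨i, hi, h⟩ := ih (fun i hi => h1 i (hi.trans (Nat.le_succ T)))
        (fun i hi => h2 i (hi.trans (Nat.lt_succ_self T))) x hx1 hc
      exact ⟨i, hi.trans (Nat.le_succ T), h⟩
    · refine ⟨T+1, le_refl _, ?_, hx2⟩
      have := h2 T (Nat.lt_succ_self T)
      omega

-- coverage of segment after odd run t : [(t+1)(e+j+k), (2t+2)(e+j-1)]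
lemma sg_cover_odd (e k j t x : ℕ) (hj : 1 ≤ j) (hjk : j+k+1 ≤ e)
    (h1 : (t+1)*(e+j+k) ≤ x) (h2 : x ≤ (2*t+2)*(e+j-1)) :
    ∃ a b, a*e + b*(e+j+k) ≤ x ∧ x ≤ a*(e+j-1) + b*(2*e-1) := by
  obtain ⟨i, hi, hL, hU⟩ := sg_chain
    (fun i => (2*i)*e + (t+1-i)*(e+j+k)) (fun i => (2*i)*(e+j-1) + (t+1-i)*(2*e-1))
    (t+1)
    (by
      intro i hi
      have t1 : (2*i)*e ≤ (2*i)*(e+j-1) := Nat.mul_le_mul_left _ (by omega)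
      have t2 : (t+1-i)*(e+j+k) ≤ (t+1-i)*(2*e-1) := Nat.mul_le_mul_left _ (by omega)
      omega)
    (by
      intro i hi
      set v := t - i with hv
      have hti : t + 1 - i = v + 1 := by omega
      have hti2 : t + 1 - (i+1) = v := by omega
      simp only [hti, hti2]
      have E1 : (2*(i+1))*e = (2*i)*e + 2*e := by ring
      have E2 : (v+1)*(2*e-1) = v*(2*e-1) + (2*e-1) := by ring
      have t1 : (2*i)*e ≤ (2*i)*(e+j-1) := Nat.mul_le_mul_left _ (by omega)
      have t2 : v*(e+j+k) ≤ v*(2*e-1) := Nat.mul_le_mul_left _ (by omega)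
      omega)
    x
    (by simpa using h1)
    (by
      have E : t+1-(t+1) = 0 := by omega
      simp only [E]
      have E2 : (2*(t+1))*(e+j-1) = (2*t+2)*(e+j-1) := by ring
      omega)
  exact ⟨2*i, t+1-i, hL, hU⟩

-- coverage of segment after even run t : [e+(t+1)(e+j+k), (2t+3)(e+j-1)]
lemma sg_cover_even (e k j t x : ℕ) (hj : 1 ≤ j) (hjk : j+k+1 ≤ e)
    (h1 : e + (t+1)*(e+j+k) ≤ x) (h2 : x ≤ (2*t+3)*(e+j-1)) :
    ∃ a b, a*e + b*(e+j+k) ≤ x ∧ x ≤ a*(e+j-1) + b*(2*e-1) := by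
  obtain ⟨i, hi, hL, hU⟩ := sg_chain
    (fun i => (2*i+1)*e + (t+1-i)*(e+j+k)) (fun i => (2*i+1)*(e+j-1) + (t+1-i)*(2*e-1))
    (t+1)
    (by
      intro i hi
      have t1 : (2*i+1)*e ≤ (2*i+1)*(e+j-1) := Nat.mul_le_mul_left _ (by omega)
      have t2 : (t+1-i)*(e+j+k) ≤ (t+1-i)*(2*e-1) := Nat.mul_le_mul_left _ (by omega)
      omega)
    (by
      intro i hi
      set v := t - i with hv
      have hti : t + 1 - i = v + 1 := by omega
      have hti2 : t + 1 - (i+1) = v := by omega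
      simp only [hti, hti2]
      have E1 : (2*(i+1)+1)*e = (2*i+1)*e + 2*e := by ring
      have E2 : (v+1)*(2*e-1) = v*(2*e-1) + (2*e-1) := by ring
      have t1 : (2*i+1)*e ≤ (2*i+1)*(e+j-1) := Nat.mul_le_mul_left _ (by omega)
      have t2 : v*(e+j+k) ≤ v*(2*e-1) := Nat.mul_le_mul_left _ (by omega)
      omega)
    x
    (by simpa using h1)
    (by
      have E : t+1-(t+1) = 0 := by omega
      simp only [E]
      have E2 : (2*(t+1)+1)*(e+j-1) = (2*t+3)*(e+j-1) := by ring
      omega)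
  exact ⟨2*i+1, t+1-i, hL, hU⟩

-- conductor: everything ≥ (N+1)(e+j+k) is representable
lemma sg_conductor (e k j N x : ℕ) (hj : 1 ≤ j) (hjk : j+k+1 ≤ e)
    (hcond : e + (N+1)*(e+j+k) ≤ (2*N+2)*(e+j-1) + 1)
    (hx : (N+1)*(e+j+k) ≤ x)
    (cover_odd : ∀ t y, (t+1)*(e+j+k) ≤ y → y ≤ (2*t+2)*(e+j-1) →
      ∃ a b, a*e + b*(e+j+k) ≤ y ∧ y ≤ a*(e+j-1) + b*(2*e-1))
    (cover_even : ∀ t y, e + (t+1)*(e+j+k) ≤ y → y ≤ (2*t+3)*(e+j-1) →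
      ∃ a b, a*e + b*(e+j+k) ≤ y ∧ y ≤ a*(e+j-1) + b*(2*e-1)) :
    ∃ a b, a*e + b*(e+j+k) ≤ x ∧ x ≤ a*(e+j-1) + b*(2*e-1) := by
  set c := (N+1)*(e+j+k) with hc
  have he : 0 < e := by omega
  have hdm : e * ((x - c) / e) + (x - c) % e = x - c := Nat.div_add_mod _ _
  have hr : (x - c) % e < e := Nat.mod_lt _ he
  set q := (x - c) / e with hq
  set r := (x - c) % e with hrdef
  have E0 : e*q = q*e := by ring
  have hy : x = (c + r) + q * e := by omega
  have hcov : ∃ a b, a*e + b*(e+j+k) ≤ c + r ∧ c + r ≤ a*(e+j-1) + b*(2*e-1) := by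
    by_cases hcase : c + r ≤ (2*N+2)*(e+j-1)
    · exact cover_odd N (c+r) (by omega) hcase
    · apply cover_even N (c+r) (by omega)
      have E : (2*N+3)*(e+j-1) = (2*N+2)*(e+j-1) + (e+j-1) := by ring
      omega
  obtain ⟨a, b, h1, h2⟩ := hcov
  refine ⟨a + q, b, ?_, ?_⟩
  · have E : (a+q)*e = a*e + q*e := by ring
    omega
  · have E : (a+q)*(e+j-1) = a*(e+j-1) + q*(e+j-1) := by ring
    have t1 : q*e ≤ q*(e+j-1) := Nat.mul_le_mul_left _ (by omega)
    omega

-- full gap characterization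
lemma sg_gap_iff (e k j N : ℕ) (hj : 1 ≤ j) (hjk : j+k+1 ≤ e)
    (hcond : e + (N+1)*(e+j+k) ≤ (2*N+2)*(e+j-1) + 1) (x : ℕ) :
    x ∉ sally e k j ↔
      ((1 ≤ x ∧ x < e) ∨
       (∃ t, t < N+1 ∧ (2*t+1)*(e+j-1) < x ∧ x < (t+1)*(e+j+k)) ∨
       (∃ t, t < N ∧ (2*t+2)*(e+j-1) < x ∧ x < e + (t+1)*(e+j+k))) := by
  constructor
  · -- not in S → in a gap run
    intro hnot
    by_contra hcon
    push_neg at hcon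
    obtain ⟨hA, hB, hC⟩ := hcon
    apply hnot
    rcases Nat.eq_zero_or_pos x with rfl | hx1
    · exact (sally e k j).zero_mem
    have hxe : e ≤ x := hA hx1
    by_cases htop : (N+1)*(e+j+k) ≤ x
    · obtain ⟨a, b, h1, h2⟩ := sg_conductor e k j N x hj hjk hcond htop
        (fun t y hy1 hy2 => sg_cover_odd e k j t y hj hjk hy1 hy2)
        (fun t y hy1 hy2 => sg_cover_even e k j t y hj hjk hy1 hy2)
      exact sg_repr_mem e k j hj hjk (a+b) a b x rfl hx1 h1 h2
    push_neg at htop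
    -- least t with x < (t+1)*(e+j+k)
    have hex : ∃ t, x < (t+1)*(e+j+k) := by
      refine ⟨x, ?_⟩
      calc x < x + 1 := Nat.lt_succ_self x
      _ = (x+1)*1 := by ring
      _ ≤ (x+1)*(e+j+k) := Nat.mul_le_mul_left _ (by omega)
    classical
    set t0 := Nat.find hex with ht0
    have hspec : x < (t0+1)*(e+j+k) := Nat.find_spec hex
    have ht0N : t0 < N + 1 := Nat.lt_succ_of_le (Nat.find_min' hex htop)
    have getrep : ∃ a b, a*e + b*(e+j+k) ≤ x ∧ x ≤ a*(e+j-1) + b*(2*e-1) := by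
      rcases t0 with _ | t
      · -- x < e+j+k, e ≤ x; must have x ≤ e+j-1
        have hxle : x ≤ e + j - 1 := by
          by_contra hgt
          push_neg at hgt
          have := hB 0 (by omega) (by omega)
          omega
        exact ⟨1, 0, by omega, by omega⟩
      · have hmin : ¬ x < (t+1)*(e+j+k) := Nat.find_min hex (by omega)
        push_neg at hmin
        by_cases hcase : x ≤ (2*t+2)*(e+j-1)
        · exact sg_cover_odd e k j t x hj hjk hmin hcase
        · push_neg at hcase
          have hC' : e + (t+1)*(e+j+k) ≤ x := hC t (by omega) hcase
          by_cases hcase2 : x ≤ (2*t+3)*(e+j-1)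
          · exact sg_cover_even e k j t x hj hjk hC' hcase2
          · push_neg at hcase2
            have hB' := hB (t+1) (by omega) (by
              have E : (2*(t+1)+1)*(e+j-1) = (2*t+3)*(e+j-1) := by ring
              omega)
            have E : (t+1+1)*(e+j+k) = (t+2)*(e+j+k) := by ring
            omega
    obtain ⟨a, b, h1, h2⟩ := getrep
    exact sg_repr_mem e k j hj hjk (a+b) a b x rfl hx1 h1 h2
  · -- in a gap run → not in S
    rintro hgap hmem
    obtain ⟨a, b, h1, h2⟩ := sg_mem_repr e k j x hmem
    rcases hgap with ⟨hx1, hx2⟩ | ⟨t, ht, hlo, hhi⟩ | ⟨t, ht, hlo, hhi⟩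
    · exact absurd (sg_pos e k j a b x h1 h2 hx1) (by omega)
    · exact sg_avoid_odd e k j t a b x hj hjk h1 h2 hlo hhi
    · exact sg_avoid_even e k j t a b x hj hjk h1 h2 hlo hhi

-- Gauss-type sum
lemma sg_sum_linear (A B : ℤ) : ∀ m : ℕ,
    2 * (∑ t ∈ Finset.range m, (A + B*(t:ℤ))) = 2*(m:ℤ)*A + B*(m:ℤ)*((m:ℤ)-1) := by
  intro m
  induction m with
  | zero => simp
  | succ m ih =>
    rw [Finset.sum_range_succ]
    push_cast
    linarith [ih]

theorem sally_frobenius_genus_odd_level (e k j n : ℕ) (hn : 2 ≤ n) (hj : 2 ≤ j)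
    (hk : 0 < k) (he : 0 < e) (hjk : j + k ≤ e - 1)
    (h1 : (n - 1) * (e - 2) + (n - 1) * j < n * k)
    (h2 : n * k ≤ (n - 1) * e + n * j - (2 * n - 1)) :
    (frobeniusNumber (sally e k j) : ℤ) = n * e + n * j + n * k - 1 ∧
    (genusOf (sally e k j) : ℤ) =
      n ^ 2 * k - n * (n - 1) * j - (n - 1) ^ 2 * e + (n - 1) * (2 * n - 1) + e - 1 := by
  classical
  obtain ⟨N, rfl⟩ : ∃ N, n = N + 1 := ⟨n-1, by omega⟩
  simp only [Nat.add_sub_cancel] at h1 h2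
  have hN1 : 1 ≤ N := by omega
  have he4 : 4 ≤ e := by omega
  have hjk' : j + k + 1 ≤ e := by omega
  have hj1 : (1:ℕ) ≤ j := by omega
  set w := e + j - 2 with hwdef
  have hw : e + j = w + 2 := by omega
  have hA : N*(e-2) + N*j = N*w := by
    have h : (e-2) + j = w := by omega
    calc N*(e-2) + N*j = N*((e-2)+j) := by ring
    _ = N*w := by rw [h]
  have hh1 : N*w < (N+1)*k := by omega
  have hkpos : 0 < (N+1)*k := Nat.mul_pos (by omega) hk
  have hh2 : (N+1)*k + (2*N+1) ≤ N*e + (N+1)*j := by omega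
  have hke : k ≤ w := by
    by_contra hgt
    push_neg at hgt
    have hmul : (N+1)*(w+1) ≤ (N+1)*k := Nat.mul_le_mul_left _ hgt
    have E1 : (N+1)*(w+1) = N*w + N + w + 1 := by ring
    have E2 : (N+1)*j = N*j + j := by ring
    have E3 : N*e + N*j = N*w + 2*N := by
      calc N*e + N*j = N*(e+j) := by ring
      _ = N*(w+2) := by rw [hw]
      _ = N*w + 2*N := by ring
    omega
  set d2 := w - k with hd2def
  have hd2 : w = k + d2 := by omega
  have hNd2 : N*d2 < k := by
    have E : N*(k+d2) = N*k + N*d2 := by ring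
    have E2 : (N+1)*k = N*k + k := by ring
    rw [hd2] at hh1
    omega
  have hE3 : N*e + N*j = N*w + 2*N := by
    calc N*e + N*j = N*(e+j) := by ring
    _ = N*(w+2) := by rw [hw]
    _ = N*w + 2*N := by ring
  have hcond : e + (N+1)*(e+j+k) ≤ (2*N+2)*(e+j-1) + 1 := by
    have E1 : (N+1)*(e+j+k) = N*e + N*j + N*k + e + j + k := by ring
    have E2 : (2*N+2)*(e+j-1) = (2*N+2)*(w+1) := by
      rw [show e+j-1 = w+1 from by omega]
    have E3 : (2*N+2)*(w+1) = 2*(N*w) + 2*N + 2*w + 2 := by ring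
    have E5 : (N+1)*k = N*k + k := by ring
    have E6 : (N+1)*j = N*j + j := by ring
    omega
  have ne_odd : ∀ t, t ≤ N → (2*t+1)*(e+j-1) + 2 ≤ (t+1)*(e+j+k) := by
    intro t ht
    have htd : t*d2 ≤ N*d2 := Nat.mul_le_mul_right _ ht
    have E1 : (2*t+1)*(e+j-1) = 2*(t*k) + 2*(t*d2) + 2*t + k + d2 + 1 := by
      rw [show e+j-1 = k+d2+1 from by omega]; ring
    have E2 : (t+1)*(e+j+k) = 2*(t*k) + t*d2 + 2*t + 2*k + d2 + 2 := by
      rw [show e+j+k = 2*k+d2+2 from by omega]; ring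
    omega
  have ne_even : ∀ t, t < N → (2*t+2)*(e+j-1) + 2 ≤ e + (t+1)*(e+j+k) := by
    intro t ht
    have htd : (t+1)*d2 ≤ N*d2 := Nat.mul_le_mul_right _ (by omega)
    have E1 : (2*t+2)*(e+j-1) = 2*(t*k) + 2*(t*d2) + 2*t + 2*k + 2*d2 + 2 := by
      rw [show e+j-1 = k+d2+1 from by omega]; ring
    have E2 : (t+1)*(e+j+k) = 2*(t*k) + t*d2 + 2*t + 2*k + d2 + 2 := by
      rw [show e+j+k = 2*k+d2+2 from by omega]; ring
    have E3 : (t+1)*d2 = t*d2 + d2 := by ring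
    omega
  have ord1 : ∀ t : ℕ, (t+1)*(e+j+k) ≤ (2*t+2)*(w+1) := by
    intro t
    have htk : t*k ≤ t*w := Nat.mul_le_mul_left _ hke
    have E1 : (t+1)*(e+j+k) = t*w + t*k + 2*t + w + k + 2 := by
      rw [show e+j+k = w+k+2 from by omega]; ring
    have E2 : (2*t+2)*(w+1) = 2*(t*w) + 2*t + 2*w + 2 := by ring
    omega
  have ord2 : ∀ t : ℕ, e + (t+1)*(e+j+k) ≤ (2*t+3)*(w+1) + 1 := by
    intro t
    have htk : t*k ≤ t*w := Nat.mul_le_mul_left _ hke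
    have E1 : (t+1)*(e+j+k) = t*w + t*k + 2*t + w + k + 2 := by
      rw [show e+j+k = w+k+2 from by omega]; ring
    have E2 : (2*t+3)*(w+1) = 2*(t*w) + 2*t + 3*w + 3 := by ring
    omega
  -- the gap Finset
  set Godd : Finset ℕ := (Finset.range (N+1)).biUnion
    (fun t => Finset.Ico ((2*t+1)*(w+1)+1) ((t+1)*(e+j+k))) with hGodd
  set Gev : Finset ℕ := (Finset.range N).biUnion
    (fun t => Finset.Ico ((2*t+2)*(w+1)+1) (e+(t+1)*(e+j+k))) with hGev
  set G : Finset ℕ := (Finset.Ico 1 e ∪ Godd) ∪ Gev with hG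
  have hEw : ∀ c : ℕ, c*(e+j-1) = c*(w+1) := by
    intro c; rw [show e+j-1 = w+1 from by omega]
  have hset : gapsOf (sally e k j) = ↑G := by
    ext x
    simp only [gapsOf, Set.mem_setOf_eq, hG, hGodd, hGev, Finset.coe_union, Set.mem_union,
      Finset.mem_coe, Finset.mem_union, Finset.mem_biUnion, Finset.mem_range, Finset.mem_Ico]
    rw [sg_gap_iff e k j N hj1 hjk' hcond x]
    constructor
    · rintro (h | ⟨t, ht, hlo, hhi⟩ | ⟨t, ht, hlo, hhi⟩)
      · exact Or.inl (Or.inl h)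
      · exact Or.inl (Or.inr ⟨t, ht, by have := hEw (2*t+1); omega, hhi⟩)
      · exact Or.inr ⟨t, ht, by have := hEw (2*t+2); omega, hhi⟩
    · rintro ((h | ⟨t, ht, hlo, hhi⟩) | ⟨t, ht, hlo, hhi⟩)
      · exact Or.inl h
      · exact Or.inr (Or.inl ⟨t, ht, by have := hEw (2*t+1); omega, hhi⟩)
      · exact Or.inr (Or.inr ⟨t, ht, by have := hEw (2*t+2); omega, hhi⟩)
  -- Frobenius number
  have honeC : 1*(e+j+k) ≤ (N+1)*(e+j+k) := Nat.mul_le_mul_right _ (by omega)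
  have hFmem : ((N+1)*(e+j+k) - 1) ∉ sally e k j := by
    rw [sg_gap_iff e k j N hj1 hjk' hcond]
    refine Or.inr (Or.inl ⟨N, Nat.lt_succ_self N, ?_, by omega⟩)
    have := ne_odd N (le_refl N)
    omega
  have hub : ∀ y ∈ gapsOf (sally e k j), y ≤ (N+1)*(e+j+k) - 1 := by
    intro y hy
    have hy' : y ∉ sally e k j := hy
    rw [sg_gap_iff e k j N hj1 hjk' hcond] at hy'
    rcases hy' with h | ⟨t, ht, hlo, hhi⟩ | ⟨t, ht, hlo, hhi⟩
    · omega
    · have : (t+1)*(e+j+k) ≤ (N+1)*(e+j+k) := Nat.mul_le_mul_right _ (by omega)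
      omega
    · have h3 : (t+2)*(e+j+k) ≤ (N+1)*(e+j+k) := Nat.mul_le_mul_right _ (by omega)
      have E : (t+2)*(e+j+k) = (t+1)*(e+j+k) + (e+j+k) := by ring
      omega
  have hFrob : frobeniusNumber (sally e k j) = (N+1)*(e+j+k) - 1 := by
    unfold frobeniusNumber
    refine le_antisymm (csSup_le ⟨_, hFmem⟩ hub) (le_csSup ⟨_, hub⟩ hFmem)
  constructor
  · rw [hFrob, Nat.cast_sub (by omega)]
    push_cast
    ring
  -- genus
  have hcard : genusOf (sally e k j) = G.card := by
    unfold genusOf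
    rw [hset, Nat.card_coe_set_eq, Set.ncard_coe_finset]
  have hmono : ∀ a b : ℕ, a ≤ b → a*(w+1) ≤ b*(w+1) := fun a b h => Nat.mul_le_mul_right _ h
  have hdisjOE : ∀ t t' x : ℕ, t' < N → (2*t+1)*(w+1)+1 ≤ x → x < (t+1)*(e+j+k) →
      (2*t'+2)*(w+1)+1 ≤ x → x < e+(t'+1)*(e+j+k) → False := by
    intro t t' x ht' hlo hhi hlo' hhi'
    rcases le_or_gt t t' with h | h
    · have := ord1 t
      have := hmono (2*t+2) (2*t'+2) (by omega)
      omega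
    · have := ord2 t'
      have := hmono (2*t'+3) (2*t+1) (by omega)
      omega
  have hcardodd : Godd.card =
      ∑ t ∈ Finset.range (N+1), ((t+1)*(e+j+k) - ((2*t+1)*(w+1)+1)) := by
    rw [hGodd, Finset.card_biUnion]
    · exact Finset.sum_congr rfl (fun t _ => Nat.card_Ico _ _)
    · intro t ht t' ht' hne
      rw [Function.onFun, Finset.disjoint_left]
      intro x hx hx'
      simp only [Finset.mem_Ico] at hx hx'
      rcases Nat.lt_or_ge t t' with h | h
      · have := ord1 t
        have := hmono (2*t+2) (2*t'+1) (by omega)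
        omega
      · have := ord1 t'
        have := hmono (2*t'+2) (2*t+1) (by omega)
        omega
  have hcardev : Gev.card =
      ∑ t ∈ Finset.range N, (e+(t+1)*(e+j+k) - ((2*t+2)*(w+1)+1)) := by
    rw [hGev, Finset.card_biUnion]
    · exact Finset.sum_congr rfl (fun t _ => Nat.card_Ico _ _)
    · intro t ht t' ht' hne
      rw [Function.onFun, Finset.disjoint_left]
      intro x hx hx'
      simp only [Finset.mem_Ico] at hx hx'
      rcases Nat.lt_or_ge t t' with h | h
      · have := ord2 t
        have := hmono (2*t+3) (2*t'+2) (by omega)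
        omega
      · have := ord2 t'
        have := hmono (2*t'+3) (2*t+2) (by omega)
        omega
  have hdisj1 : Disjoint (Finset.Ico 1 e) Godd := by
    rw [Finset.disjoint_left]
    intro x hx hx'
    simp only [Finset.mem_Ico] at hx
    simp only [hGodd, Finset.mem_biUnion, Finset.mem_range, Finset.mem_Ico] at hx'
    obtain ⟨t, ht, hlo, hhi⟩ := hx'
    have := hmono 1 (2*t+1) (by omega)
    omega
  have hdisj2 : Disjoint (Finset.Ico 1 e ∪ Godd) Gev := by
    rw [Finset.disjoint_left]
    intro x hx hx'
    simp only [hGev, Finset.mem_biUnion, Finset.mem_range, Finset.mem_Ico] at hx'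
    obtain ⟨t', ht', hlo', hhi'⟩ := hx'
    rcases Finset.mem_union.mp hx with hx | hx
    · simp only [Finset.mem_Ico] at hx
      have := hmono 1 (2*t'+2) (by omega)
      omega
    · simp only [hGodd, Finset.mem_biUnion, Finset.mem_range, Finset.mem_Ico] at hx
      obtain ⟨t, ht, hlo, hhi⟩ := hx
      exact hdisjOE t t' x ht' hlo hhi hlo' hhi'
  have hGcard : G.card = (e - 1) +
      (∑ t ∈ Finset.range (N+1), ((t+1)*(e+j+k) - ((2*t+1)*(w+1)+1))) +
      (∑ t ∈ Finset.range N, (e+(t+1)*(e+j+k) - ((2*t+2)*(w+1)+1))) := by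
    rw [hG, Finset.card_union_of_disjoint hdisj2, Finset.card_union_of_disjoint hdisj1,
      Nat.card_Ico, hcardodd, hcardev]
  -- cast sums to ℤ
  have hwZ : (w:ℤ) = (e:ℤ) + (j:ℤ) - 2 := by
    have : ((e + j : ℕ) : ℤ) = ((w + 2 : ℕ) : ℤ) := by rw [hw]
    push_cast at this
    omega
  have hsodd : ((∑ t ∈ Finset.range (N+1), ((t+1)*(e+j+k) - ((2*t+1)*(w+1)+1)) : ℕ) : ℤ)
      = ∑ t ∈ Finset.range (N+1),
          ((((e:ℤ)+j+k) - ((w:ℤ)+1) - 1) + (((e:ℤ)+j+k) - 2*((w:ℤ)+1))*(t:ℤ)) := by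
    rw [Nat.cast_sum]
    apply Finset.sum_congr rfl
    intro t ht
    simp only [Finset.mem_range] at ht
    have hne := ne_odd t (by omega)
    have := hEw (2*t+1)
    rw [Nat.cast_sub (by omega)]
    push_cast
    ring
  have hsev : ((∑ t ∈ Finset.range N, (e+(t+1)*(e+j+k) - ((2*t+2)*(w+1)+1)) : ℕ) : ℤ)
      = ∑ t ∈ Finset.range N,
          (((e:ℤ) + ((e:ℤ)+j+k) - 2*((w:ℤ)+1) - 1) + (((e:ℤ)+j+k) - 2*((w:ℤ)+1))*(t:ℤ)) := by
    rw [Nat.cast_sum]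
    apply Finset.sum_congr rfl
    intro t ht
    simp only [Finset.mem_range] at ht
    have hne := ne_even t (by omega)
    have := hEw (2*t+2)
    rw [Nat.cast_sub (by omega)]
    push_cast
    ring
  have S1 := sg_sum_linear (((e:ℤ)+j+k) - ((w:ℤ)+1) - 1) (((e:ℤ)+j+k) - 2*((w:ℤ)+1)) (N+1)
  have S2 := sg_sum_linear (((e:ℤ) + ((e:ℤ)+j+k) - 2*((w:ℤ)+1) - 1)) (((e:ℤ)+j+k) - 2*((w:ℤ)+1)) N
  have hgoal : (genusOf (sally e k j) : ℤ) =
      ((e:ℤ) - 1) + ((∑ t ∈ Finset.range (N+1), ((t+1)*(e+j+k) - ((2*t+1)*(w+1)+1)) : ℕ) : ℤ)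
        + ((∑ t ∈ Finset.range N, (e+(t+1)*(e+j+k) - ((2*t+2)*(w+1)+1)) : ℕ) : ℤ) := by
    rw [hcard, hGcard]
    push_cast [Nat.cast_sub (show 1 ≤ e by omega)]
    ring
  rw [hgoal, hsodd, hsev]
  push_cast
  rw [hwZ] at S1 S2 ⊢
  push_cast at S1 S2
  linarith [S1, S2]
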